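/- Let M be a loopless matroid of rank n on {0,...,N}, with V = ℤ^{N+1} and W = (ℤ^{N+1})^* dual groups with dual bases {e_i} and {f_i}. Then for every k, the annihilator of F_k(Σ(M)) ⊆ ⋀^k V under the pairing with ⋀^k W equals the degree-k part OS^k of the Orlik–Solomon ideal: F_k(Σ(M))^⊥ = OS^k. -/

import Mathlib

/- Shared definitions: exterior algebra pairing, basis vectors, boundary operator,
   and elementary matroid notions (rank, looplessness) not present in this Mathlib. -/

open ExteriorAlgebra

set_option maxHeartbeats 1000000
set_option synthInstance.maxHeartbeats 400000

open Classical in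
/-- `e_S`: sum of the standard basis vectors of `ℤ^n` indexed by `S`. -/
noncomputable def eS {n : ℕ} (S : Set (Fin n)) : Fin n → ℤ := fun j => if j ∈ S then 1 else 0

/-- the `i`-th standard basis vector of `ℤ^n`. -/
noncomputable def fb {n : ℕ} (i : Fin n) : Fin n → ℤ := Pi.single i 1

/-- The pairing of a pure `k`-fold wedge `v₁ ∧ ... ∧ v_k` of vectors of `V` with the
exterior algebra of the dual module, determined by
`⟨w₁ ∧ ... ∧ w_k, v₁ ∧ ... ∧ v_k⟩ = det (wᵢ (vⱼ))` on the degree-`k` part and `0` on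
other degrees. -/
noncomputable def pairPure {V : Type*} [AddCommGroup V] [Module ℤ V] (k : ℕ)
    (v : Fin k → V) : ExteriorAlgebra ℤ (Module.Dual ℤ V) →ₗ[ℤ] ℤ :=
  ExteriorAlgebra.liftAlternating fun m =>
    if h : m = k then
      h ▸ (Matrix.detRowAlternating.compLinearMap
        (LinearMap.pi fun j : Fin k => LinearMap.applyₗ (v j)))
    else 0

/-- A matroid is loopless if every singleton of the ground set is independent. -/
def Matroid.Loopless' {α : Type*} (M : Matroid α) : Prop := ∀ x ∈ M.E, M.Indep {x}

/-- The rank of a set in a matroid: the largest cardinality of an independent subset. -/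
noncomputable def Matroid.rk' {α : Type*} (M : Matroid α) (X : Set α) : ℕ :=
  sSup {m : ℕ | ∃ I, I ⊆ X ∧ M.Indep I ∧ I.ncard = m}

/-- The dual basis vector `f_i ∈ W = (ℤ^n)^*`: the `i`-th coordinate functional. -/
noncomputable def fd {n : ℕ} (i : Fin n) : Module.Dual ℤ (Fin n → ℤ) :=
  LinearMap.proj i

/-- `F_I = f_{i₀} ∧ ... ∧ f_{i_k}` in `⋀^• W`, `W = (ℤ^n)^*`, in increasing order. -/
noncomputable def FId {n : ℕ} (I : Finset (Fin n)) :
    ExteriorAlgebra ℤ (Module.Dual ℤ (Fin n → ℤ)) :=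
  ExteriorAlgebra.ιMulti ℤ I.card fun j => fd ((I.orderIsoOfFin rfl j : I) : Fin n)

/-- The boundary operator `∂` on `⋀^• W` for `W = (ℤ^n)^*`: interior multiplication by
`e_M = e_0 + ... + e_{n-1}`; it satisfies `∂ f_i = f_i(e_M) = 1`. -/
noncomputable def bndD (n : ℕ) :
    ExteriorAlgebra ℤ (Module.Dual ℤ (Fin n → ℤ)) →ₗ[ℤ]
      ExteriorAlgebra ℤ (Module.Dual ℤ (Fin n → ℤ)) :=
  CliffordAlgebra.contractLeft (Module.Dual.eval ℤ (Fin n → ℤ) (eS Set.univ))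

/-- The Orlik-Solomon ideal in `⋀^• W`, `W = (ℤ^n)^*`: the two-sided ideal generated by
the `∂F_I` over dependent sets `I` of `M`. -/
noncomputable def OSidealD {n : ℕ} (M : Matroid (Fin n)) :
    Submodule ℤ (ExteriorAlgebra ℤ (Module.Dual ℤ (Fin n → ℤ))) :=
  Submodule.span ℤ {z | ∃ x, ∃ y, ∃ I : Finset (Fin n),
    M.Dep (I : Set (Fin n)) ∧ z = x * bndD n (FId I) * y}

namespace Stmt14


variable {R : Type*} [CommRing R] {M : Type*} [AddCommGroup M] [Module R M]

lemma iotaEq : (ExteriorAlgebra.ι R (M := M)) = CliffordAlgebra.ι (0 : QuadraticForm R M) := rfl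

theorem ι_mul_ιMulti {m : ℕ} (x : M) (w : Fin m → M) :
    ι R x * ιMulti R m w = ιMulti R (m+1) (Fin.cons x w) := by
  rw [ιMulti_succ_apply (v := Fin.cons x w)]
  rfl

theorem contract_ιMulti {m : ℕ} (d : Module.Dual R M) (v : Fin (m+1) → M) :
    CliffordAlgebra.contractLeft (Q := (0 : QuadraticForm R M)) d (ιMulti R (m+1) v) =
      ∑ j : Fin (m+1), ((-1:R)^(j:ℕ) * d (v j)) • ιMulti R m (v ∘ j.succAbove) := by
  induction m with
  | zero =>
      rw [ιMulti_succ_apply, ιMulti_zero_apply, mul_one, iotaEq,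
        CliffordAlgebra.contractLeft_ι]
      simp [Algebra.algebraMap_eq_smul_one]
  | succ m ih =>
      have h0 : v ∘ (0 : Fin (m+2)).succAbove = Matrix.vecTail v := by
        ext i; simp [Matrix.vecTail, Fin.succAbove_zero]
      have hsucc : ∀ j : Fin (m+1),
          v ∘ (j.succ).succAbove = Fin.cons (v 0) (Matrix.vecTail v ∘ j.succAbove) := by
        intro j; ext i
        refine Fin.cases ?_ (fun i => ?_) i
        · simp [Fin.succ_succAbove_zero]
        · simp [Fin.succ_succAbove_succ, Matrix.vecTail, Fin.cons_succ]
      rw [ιMulti_succ_apply, iotaEq, CliffordAlgebra.contractLeft_ι_mul, ih]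
      conv_rhs => rw [Fin.sum_univ_succ]
      rw [h0, Finset.mul_sum, sub_eq_add_neg, ← Finset.sum_neg_distrib]
      congr 1
      · simp
      · congr 1; ext j
        rw [hsucc, mul_smul_comm, ← iotaEq, ι_mul_ιMulti, ← neg_smul]
        congr 1
        have : Matrix.vecTail v j = v j.succ := rfl
        rw [this]
        push_cast [Fin.val_succ]
        ring

theorem alt_sum_zero {m : ℕ} (v : Fin (m+1) → M) {a b : Fin (m+1)} (hab : a ≠ b)
    (hv : v a = v b) :
    ∑ j : Fin (m+1), ((-1:R)^(j:ℕ)) • ιMulti R m (v ∘ j.succAbove) = 0 := by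
  classical
  set v' : Fin (m+1) → M × R := fun j => (v j, 1) with hv'
  have hz : ιMulti R (m+1) v' = 0 :=
    AlternatingMap.map_eq_zero_of_eq _ v' (by simp [hv', hv]) hab
  have h := contract_ιMulti (R := R) (LinearMap.snd R M R) v'
  rw [hz, map_zero] at h
  have h2 := congrArg (ExteriorAlgebra.map (LinearMap.fst R M R)) h.symm
  rw [map_zero, map_sum] at h2
  rw [← h2]
  congr 1; ext j
  rw [map_smul, map_apply_ιMulti]
  simp only [hv', LinearMap.snd_apply, mul_one]
  congr 1



variable {V : Type*} [AddCommGroup V] [Module ℤ V]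

noncomputable def detTop (k : ℕ) : ExteriorAlgebra ℤ (Fin k → ℤ) →ₗ[ℤ] ℤ :=
  ExteriorAlgebra.liftAlternating fun m =>
    if h : m = k then h ▸ (Matrix.detRowAlternating (R := ℤ) (n := Fin k)) else 0

theorem detTop_eq {k : ℕ} (x : Fin k → Fin k → ℤ) :
    detTop k (ιMulti ℤ k x) = Matrix.det (Matrix.of x) := by
  rw [detTop, ExteriorAlgebra.liftAlternating_apply_ιMulti, dif_pos rfl]
  rfl

theorem detTop_ne {k m : ℕ} (h : m ≠ k) (x : Fin m → Fin k → ℤ) :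
    detTop k (ιMulti ℤ m x) = 0 := by
  rw [detTop, ExteriorAlgebra.liftAlternating_apply_ιMulti, dif_neg h]
  rfl

noncomputable def PhiMap {k : ℕ} (v : Fin k → V) :
    Module.Dual ℤ V →ₗ[ℤ] (Fin k → ℤ) :=
  LinearMap.pi fun j => LinearMap.applyₗ (v j)

theorem pairPure_eq_detTop {k : ℕ} (v : Fin k → V) :
    pairPure k v = (detTop k).comp (ExteriorAlgebra.map (PhiMap v)).toLinearMap := by
  apply ExteriorAlgebra.lhom_ext
  intro m
  ext w
  simp only [LinearMap.compAlternatingMap_apply, LinearMap.comp_apply, AlgHom.toLinearMap_apply,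
    map_apply_ιMulti]
  rw [pairPure, ExteriorAlgebra.liftAlternating_apply_ιMulti]
  by_cases h : m = k
  · subst h
    rw [dif_pos rfl]
    rw [detTop_eq]
    rfl
  · rw [dif_neg h, detTop_ne h]
    rfl



variable {α : Type*} [DecidableEq α] {M : Matroid α}

/-- circuit as a finset: minimal dependent -/
def Circ (M : Matroid α) (C : Finset α) : Prop :=
  M.Dep (C : Set α) ∧ ∀ x ∈ C, M.Indep ((C.erase x : Finset α) : Set α)

lemma Circ.nonempty {C : Finset α} (hC : Circ M C) : C.Nonempty := by
  rcases C.eq_empty_or_nonempty with h | h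
  · exfalso; rw [h] at hC; exact hC.1.not_indep (by simpa using M.empty_indep)
  · exact h

lemma exists_circ {S : Finset α} (hS : M.Dep (S : Set α)) : ∃ C ⊆ S, Circ M C := by
  classical
  induction S using Finset.strongInduction with
  | _ S ih =>
    by_cases h : ∀ x ∈ S, M.Indep ((S.erase x : Finset α) : Set α)
    · exact ⟨S, le_refl _, hS, h⟩
    · push_neg at h
      obtain ⟨x, hx, hdep⟩ := h
      have hsub : (S.erase x : Set α) ⊆ M.E :=
        Set.Subset.trans (by exact_mod_cast Finset.coe_subset.2 (S.erase_subset x)) hS.subset_ground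
      have : M.Dep ((S.erase x : Finset α) : Set α) := ⟨hdep, hsub⟩
      obtain ⟨C, hCsub, hC⟩ := ih (S.erase x) (Finset.erase_ssubset hx) this
      exact ⟨C, hCsub.trans (S.erase_subset x), hC⟩

lemma Circ.mem_closure_erase {C : Finset α} (hC : Circ M C) {x : α} (hx : x ∈ C) :
    x ∈ M.closure ((C.erase x : Finset α) : Set α) := by
  classical
  have hind := hC.2 x hx
  have hins : insert x ((C.erase x : Finset α) : Set α) = (C : Set α) := by
    rw [← Finset.coe_insert, Finset.insert_erase hx]
  have := hind.insert_dep_iff (e := x)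
  rw [hins] at this
  exact ((this.1 hC.1).1)

lemma Circ.one_lt_card {C : Finset α} (hC : Circ M C) (hM : M.Loopless') : 1 < C.card := by
  classical
  by_contra h
  push_neg at h
  obtain ⟨x, hx⟩ := hC.nonempty
  have : C = {x} := by
    apply Finset.eq_singleton_iff_unique_mem.2
    exact ⟨hx, fun y hy => by
      by_contra hne
      have : 1 < C.card := Finset.one_lt_card.2 ⟨y, hy, x, hx, hne⟩
      omega⟩
  rw [this] at hC
  have hxE : x ∈ M.E := hC.1.subset_ground (by simp)
  exact hC.1.not_indep (by simpa using hM x hxE)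

variable [LinearOrder α]

/-- `S` contains a broken circuit -/
def HasBC (M : Matroid α) (S : Finset α) : Prop :=
  ∃ C : Finset α, ∃ hC : Circ M C, C.erase (C.min' hC.nonempty) ⊆ S

/-- no-broken-circuit sets -/
def NBC (M : Matroid α) (S : Finset α) : Prop :=
  M.Indep (S : Set α) ∧ ¬ HasBC M S


/-! ### `FId` infrastructure -/

lemma flat_closure {α : Type*} (M : Matroid α) (X : Set α) : M.IsFlat (M.closure X) := by
  rw [Matroid.closure_def, Set.sInter_eq_iInter]
  have : Nonempty {F // F ∈ {F | M.IsFlat F ∧ X ∩ M.E ⊆ F}} :=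
    ⟨⟨M.E, M.ground_isFlat, Set.inter_subset_right⟩⟩
  exact Matroid.IsFlat.iInter fun F => F.2.1

variable {n : ℕ}

lemma FId_eq {S : Finset (Fin n)} {m : ℕ} (h : S.card = m) :
    FId S = ιMulti ℤ m (fun j => fd (S.orderEmbOfFin h j)) := by
  subst h; rfl

lemma card_erase_ord {S : Finset (Fin n)} {m : ℕ} (h : S.card = m + 1) (a : Fin n)
    (ha : a ∈ S) : (S.erase a).card = m := by
  rw [Finset.card_erase_of_mem ha, h]; rfl

lemma ord_erase {S : Finset (Fin n)} {m : ℕ} (h : S.card = m+1) (j : Fin (m+1)) :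
    (fun i => S.orderEmbOfFin h (j.succAbove i)) =
      (S.erase (S.orderEmbOfFin h j)).orderEmbOfFin
        (card_erase_ord h _ (Finset.orderEmbOfFin_mem S h j)) := by
  apply Finset.orderEmbOfFin_unique
  · intro i
    refine Finset.mem_erase.2 ⟨?_, Finset.orderEmbOfFin_mem S h _⟩
    intro hEq
    exact Fin.succAbove_ne j i ((S.orderEmbOfFin h).injective hEq)
  · exact (S.orderEmbOfFin h).strictMono.comp (Fin.strictMono_succAbove j)

lemma eval_fd (i : Fin n) :
    (Module.Dual.eval ℤ (Fin n → ℤ) (eS Set.univ)) (fd i) = 1 := by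
  simp [Module.Dual.eval, fd, eS]

lemma bnd_FId {S : Finset (Fin n)} {m : ℕ} (h : S.card = m+1) :
    bndD n (FId S) = ∑ j : Fin (m+1),
      ((-1:ℤ)^(j:ℕ)) • FId (S.erase (S.orderEmbOfFin h j)) := by
  rw [FId_eq h, bndD, contract_ιMulti]
  congr 1; ext j
  rw [eval_fd, mul_one]
  congr 1
  rw [FId_eq (card_erase_ord h _ (Finset.orderEmbOfFin_mem S h j)), ← ord_erase h j]
  rfl

lemma dep_FId_mem {M : Matroid (Fin n)} {S : Finset (Fin n)}
    (hS : M.Dep (S : Set (Fin n))) : FId S ∈ OSidealD M := by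
  classical
  have hne : S ≠ ∅ := by
    rintro rfl
    exact hS.not_indep (by simpa using M.empty_indep)
  obtain ⟨m, hm⟩ : ∃ m, S.card = m + 1 :=
    Nat.exists_eq_succ_of_ne_zero (fun h => hne (Finset.card_eq_zero.1 h))
  have key : ExteriorAlgebra.ι ℤ (fd (S.orderEmbOfFin hm 0)) * bndD n (FId S) * 1 = FId S := by
    rw [mul_one, bnd_FId hm, Finset.mul_sum, Fin.sum_univ_succ]
    have h0 : ExteriorAlgebra.ι ℤ (fd (S.orderEmbOfFin hm 0)) *
        (((-1:ℤ)^(((0:Fin (m+1))):ℕ)) • FId (S.erase (S.orderEmbOfFin hm 0))) = FId S := by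
      rw [show (((0:Fin (m+1))):ℕ) = 0 from rfl, pow_zero, one_smul,
        FId_eq (card_erase_ord hm _ (Finset.orderEmbOfFin_mem S hm 0)), ι_mul_ιMulti,
        FId_eq hm]
      congr 1
      ext i
      refine Fin.cases ?_ (fun i => ?_) i
      · simp
      · rw [Fin.cons_succ, ← ord_erase hm 0]
        simp [Fin.succAbove_zero]
    have hs : ∀ i : Fin m, ExteriorAlgebra.ι ℤ (fd (S.orderEmbOfFin hm 0)) *
        (((-1:ℤ)^((Fin.succ i : Fin (m+1)):ℕ)) •
          FId (S.erase (S.orderEmbOfFin hm i.succ))) = 0 := by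
      intro i
      have hmem : S.orderEmbOfFin hm 0 ∈ S.erase (S.orderEmbOfFin hm i.succ) :=
        Finset.mem_erase.2 ⟨fun h => Fin.succ_ne_zero i
          ((S.orderEmbOfFin hm).injective h).symm, Finset.orderEmbOfFin_mem S hm 0⟩
      have hrange : S.orderEmbOfFin hm 0 ∈ Set.range ((S.erase (S.orderEmbOfFin hm i.succ)).orderEmbOfFin
          (card_erase_ord hm _ (Finset.orderEmbOfFin_mem S hm i.succ))) := by
        rw [Finset.range_orderEmbOfFin]
        exact_mod_cast hmem
      obtain ⟨l, hl⟩ := hrange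
      rw [FId_eq (card_erase_ord hm _ (Finset.orderEmbOfFin_mem S hm i.succ)),
        mul_smul_comm, ι_mul_ιMulti]
      have hzero : ιMulti ℤ (m+1) (Fin.cons (fd (S.orderEmbOfFin hm 0))
          (fun j => fd ((S.erase (S.orderEmbOfFin hm i.succ)).orderEmbOfFin
            (card_erase_ord hm _ (Finset.orderEmbOfFin_mem S hm i.succ)) j))) = 0 := by
      
        refine AlternatingMap.map_eq_zero_of_eq _ _ (i := l.succ) (j := 0) ?_ (Fin.succ_ne_zero l)
        rw [Fin.cons_succ, Fin.cons_zero, hl]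
      rw [hzero, smul_zero]
    rw [h0, Finset.sum_eq_zero (fun i _ => hs i), add_zero]
  rw [← key]
  exact Submodule.subset_span ⟨_, 1, S, hS, rfl⟩

noncomputable def nbcSpan (M : Matroid (Fin n)) (k : ℕ) :
    Submodule ℤ (ExteriorAlgebra ℤ (Module.Dual ℤ (Fin n → ℤ))) :=
  Submodule.span ℤ (Set.range
    (fun S : {S : Finset (Fin n) // S.card = k ∧ NBC M S} => FId S.1))

lemma FId_mem_sup {M : Matroid (Fin n)} (hE : M.E = Set.univ) {k : ℕ} :
    ∀ (v : ℕ) (S : Finset (Fin n)), (∑ i ∈ S, 2^(i:ℕ)) = v → S.card = k →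
      FId S ∈ OSidealD M ⊔ nbcSpan M k := by
  intro v
  induction v using Nat.strong_induction_on with
  | _ v ih =>
  intro S hv hk
  classical
  by_cases hdep : M.Dep (S : Set (Fin n))
  · exact Submodule.mem_sup_left (dep_FId_mem hdep)
  have hind : M.Indep (S : Set (Fin n)) := by
    by_contra h
    exact hdep ⟨h, by rw [hE]; exact Set.subset_univ _⟩
  by_cases hbc : HasBC M S
  swap
  · exact Submodule.mem_sup_right (Submodule.subset_span ⟨⟨S, hk, hind, hbc⟩, rfl⟩)
  obtain ⟨C, hC, hCS⟩ := hbc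
  set e := C.min' hC.nonempty with he
  have heC : e ∈ C := C.min'_mem _
  have heS : e ∉ S := by
    intro heS
    refine hdep (hC.1.superset ?_ (by rw [hE]; exact Set.subset_univ _))
    intro x hx
    rw [Finset.mem_coe] at hx ⊢
    rcases eq_or_ne x e with rfl | hne
    · exact heS
    · exact hCS (Finset.mem_erase.2 ⟨hne, hx⟩)
  set S' := insert e S with hS'def
  have hS'card : S'.card = k + 1 := by
    rw [hS'def, Finset.card_insert_of_notMem heS, hk]
  have hCS' : (C : Set (Fin n)) ⊆ (S' : Set (Fin n)) := by
    intro x hx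
    rw [Finset.mem_coe] at hx ⊢
    rcases eq_or_ne x e with rfl | hne
    · exact Finset.mem_insert_self _ _
    · exact Finset.mem_insert_of_mem (hCS (Finset.mem_erase.2 ⟨hne, hx⟩))
  have hS'dep : M.Dep (S' : Set (Fin n)) :=
    hC.1.superset hCS' (by rw [hE]; exact Set.subset_univ _)
  have hgen : bndD n (FId S') ∈ OSidealD M :=
    Submodule.subset_span ⟨1, 1, S', hS'dep, by rw [one_mul, mul_one]⟩
  obtain ⟨j0, hj0⟩ : ∃ j0, S'.orderEmbOfFin hS'card j0 = e := by
    have : e ∈ Set.range (S'.orderEmbOfFin hS'card) := by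
      rw [Finset.range_orderEmbOfFin]
      exact Finset.mem_coe.2 (Finset.mem_insert_self _ _)
    exact this.imp fun _ h => h
  have herase : S'.erase (S'.orderEmbOfFin hS'card j0) = S := by
    rw [hj0, hS'def, Finset.erase_insert heS]
  -- the key algebraic identity
  have hkey : FId S = ((-1:ℤ)^(j0:ℕ)) • (bndD n (FId S') -
      ∑ j ∈ Finset.univ.erase j0,
        ((-1:ℤ)^(j:ℕ)) • FId (S'.erase (S'.orderEmbOfFin hS'card j))) := by
    rw [bnd_FId hS'card, ← Finset.sum_erase_add _ _ (Finset.mem_univ j0),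
      add_sub_cancel_left, herase, smul_smul, ← pow_add]
    rw [Even.neg_one_pow ⟨(j0:ℕ), rfl⟩, one_smul]
  rw [hkey]
  refine Submodule.smul_mem _ _ (Submodule.sub_mem _ (Submodule.mem_sup_left hgen) ?_)
  refine Submodule.sum_mem _ ?_
  intro j hj
  refine Submodule.smul_mem _ _ ?_
  have hjne : j ≠ j0 := (Finset.mem_erase.1 hj).1
  set b := S'.orderEmbOfFin hS'card j with hb
  have hbe : b ≠ e := by
    rw [← hj0]
    exact fun h => hjne ((S'.orderEmbOfFin hS'card).injective h)
  have hbS' : b ∈ S' := Finset.orderEmbOfFin_mem _ _ _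
  have hbS : b ∈ S := by
    rcases Finset.mem_insert.1 hbS' with h | h
    · exact absurd h hbe
    · exact h
  have hTj : S'.erase b = insert e (S.erase b) := by
    rw [hS'def, Finset.erase_insert_of_ne hbe.symm]
  by_cases hdepT : M.Dep ((S'.erase b : Finset (Fin n)) : Set (Fin n))
  · exact Submodule.mem_sup_left (dep_FId_mem hdepT)
  -- then b ∈ C, so e < b and the induction applies
  have hbC : b ∈ C := by
    by_contra hbC
    refine hdepT (hC.1.superset ?_ (by rw [hE]; exact Set.subset_univ _))
    intro x hx
    rw [Finset.mem_coe] at hx ⊢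
    exact Finset.mem_erase.2 ⟨fun h => hbC (h ▸ hx), Finset.mem_coe.1 (hCS' hx)⟩
  have heb : e < b := lt_of_le_of_ne (C.min'_le b hbC) hbe.symm
  have hcard : (S'.erase b).card = k := card_erase_ord hS'card b hbS'
  have hmsum : (∑ i ∈ S'.erase b, 2^(i:ℕ)) < v := by
    rw [hTj, Finset.sum_insert (fun h => heS (Finset.mem_of_mem_erase h))]
    rw [← hv, ← Finset.sum_erase_add S _ hbS]
    have : (2:ℕ)^(e:ℕ) < 2^(b:ℕ) := Nat.pow_lt_pow_right (by norm_num) heb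
    omega
  exact ih _ hmsum _ rfl hcard

lemma dual_expand (w : Module.Dual ℤ (Fin n → ℤ)) :
    w = ∑ j, (w (fb j)) • fd j := by
  refine LinearMap.ext fun x => ?_
  have hx : x = ∑ j, x j • fb j := by
    funext i
    rw [Finset.sum_apply]
    simp [fb, Pi.single_apply]
  conv_lhs => rw [hx]
  rw [map_sum, LinearMap.sum_apply]
  refine Finset.sum_congr rfl fun j _ => ?_
  rw [map_smul, LinearMap.smul_apply, smul_eq_mul, smul_eq_mul, mul_comm]
  rfl

lemma exterior_mem_span {k : ℕ} {f : ExteriorAlgebra ℤ (Module.Dual ℤ (Fin n → ℤ))}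
    (hf : f ∈ ⋀[ℤ]^k (Module.Dual ℤ (Fin n → ℤ))) :
    f ∈ Submodule.span ℤ {z | ∃ S : Finset (Fin n), S.card = k ∧ z = FId S} := by
  classical
  rw [← ιMulti_span_fixedDegree] at hf
  refine Submodule.span_le.2 ?_ hf
  rintro z ⟨w, rfl⟩
  have hw : ιMulti ℤ k w = ∑ r : Fin k → Fin n,
      (∏ i, w i (fb (r i))) • ιMulti ℤ k (fun i => fd (r i)) := by
    have h1 : ιMulti ℤ k w = ιMulti ℤ k (fun i => ∑ j, (w i (fb j)) • fd j) := by
      congr 1; funext i; exact dual_expand (w i)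
    rw [h1]
    have h2 := (ιMulti ℤ k (M := Module.Dual ℤ (Fin n → ℤ))).toMultilinearMap.map_sum
      (g := fun i j => (w i (fb j)) • fd j)
    rw [show ((ιMulti ℤ k (M := Module.Dual ℤ (Fin n → ℤ))) fun i => ∑ j, (w i (fb j)) • fd j)
      = ((ιMulti ℤ k (M := Module.Dual ℤ (Fin n → ℤ))).toMultilinearMap
        fun i => ∑ j, (w i (fb j)) • fd j) from rfl, h2]
    congr 1; funext r
    exact (ιMulti ℤ k (M := Module.Dual ℤ (Fin n → ℤ))).toMultilinearMap.map_smul_univ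
      (fun i => w i (fb (r i))) (fun i => fd (r i))
  rw [hw]
  refine Submodule.sum_mem _ ?_
  intro r _
  refine Submodule.smul_mem _ _ ?_
  by_cases hr : Function.Injective r
  · set S : Finset (Fin n) := Finset.univ.image r with hS
    have hcard : S.card = k := by
      rw [hS, Finset.card_image_of_injective _ hr, Finset.card_univ, Fintype.card_fin]
    have hmem : ∀ i, r i ∈ S := fun i => Finset.mem_image.2 ⟨i, Finset.mem_univ i, rfl⟩
    set σ : Fin k → Fin k := fun i => (S.orderIsoOfFin hcard).symm ⟨r i, hmem i⟩ with hσ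
    have hσinj : Function.Injective σ := by
      intro a b hab
      have h2 := congrArg (S.orderIsoOfFin hcard) hab
      simp only [hσ, OrderIso.apply_symm_apply] at h2
      exact hr (Subtype.ext_iff.1 h2)
    have hσbij : Function.Bijective σ := (Finite.injective_iff_bijective).1 hσinj
    set eqv : Equiv.Perm (Fin k) := Equiv.ofBijective σ hσbij with heqv
    have hcomp : (fun i => fd (S.orderEmbOfFin hcard i)) ∘ eqv = fun i => fd (r i) := by
      funext i
      have : S.orderEmbOfFin hcard (σ i) = r i := by
        rw [← Finset.coe_orderIsoOfFin_apply]
        simp [hσ]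
      simp only [Function.comp_apply, heqv, Equiv.ofBijective_apply, this]
    have hperm := (ιMulti ℤ k (M := Module.Dual ℤ (Fin n → ℤ))).map_perm
      (fun i => fd (S.orderEmbOfFin hcard i)) eqv
    rw [hcomp] at hperm
    rw [hperm, Units.smul_def]
    refine Submodule.smul_mem _ _ (Submodule.subset_span ?_)
    exact ⟨S, hcard, (FId_eq hcard).symm ▸ rfl⟩
  · rw [Function.not_injective_iff] at hr
    obtain ⟨a, b, hab, hne⟩ := hr
    rw [AlternatingMap.map_eq_zero_of_eq _ _ (by rw [hab]) hne]
    exact Submodule.zero_mem _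

theorem pairPure_eq {V : Type*} [AddCommGroup V] [Module ℤ V] {k : ℕ} (v : Fin k → V)
    (w : Fin k → Module.Dual ℤ V) :
    pairPure k v (ιMulti ℤ k w) = Matrix.det (Matrix.of fun i j => w i (v j)) := by
  rw [pairPure, ExteriorAlgebra.liftAlternating_apply_ιMulti, dif_pos rfl]
  rfl

lemma exists_dup_row {M : Matroid (Fin n)} (hM : M.Loopless') (hE : M.E = Set.univ)
    {k : ℕ} (c : Fin k → Set (Fin n)) (hflat : ∀ b, M.IsFlat (c b)) (hmono : Monotone c)
    {I : Finset (Fin n)} (hI : M.Dep (I : Set (Fin n))) :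
    ∃ x ∈ I, ∃ y ∈ I, x ≠ y ∧ ∀ b, (x ∈ c b ↔ y ∈ c b) := by
  classical
  by_contra hcon
  push_neg at hcon
  obtain ⟨C, hCI, hC⟩ := exists_circ hI
  have hcard := hC.one_lt_card hM
  set U : Fin n → Finset (Fin k) := fun i => Finset.univ.filter (fun b => i ∈ c b) with hU
  have hmemU : ∀ i b, b ∈ U i ↔ i ∈ c b := by
    intro i b; simp [hU]
  have htot : ∀ i i', U i ⊆ U i' ∨ U i' ⊆ U i := by
    intro i i'
    by_contra h
    push_neg at h
    obtain ⟨h1, h2⟩ := h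
    obtain ⟨b, hb, hb'⟩ := Finset.not_subset.1 h1
    obtain ⟨b', hb2, hb2'⟩ := Finset.not_subset.1 h2
    rcases le_total b b' with hle | hle
    · exact hb2' ((hmemU i b').2 (hmono hle ((hmemU i b).1 hb)))
    · exact hb' ((hmemU i' b).2 (hmono hle ((hmemU i' b').1 hb2)))
  have hdist : ∀ x ∈ C, ∀ y ∈ C, x ≠ y → U x ≠ U y := by
    intro x hx y hy hne hEq
    obtain ⟨b, hb⟩ := hcon x (hCI hx) y (hCI hy) hne
    rcases hb with ⟨h1, h2⟩ | ⟨h1, h2⟩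
    · exact h2 ((hmemU y b).1 (by rw [← hEq]; exact (hmemU x b).2 h1))
    · exact h1 ((hmemU x b).1 (by rw [hEq]; exact (hmemU y b).2 h2))
  obtain ⟨ch, hchC, hchmin⟩ := Finset.exists_min_image C (fun i => (U i).card) ⟨_, hC.nonempty.choose_spec⟩
  have herne : (C.erase ch).Nonempty := by
    rw [← Finset.card_pos, Finset.card_erase_of_mem hchC]
    omega
  obtain ⟨c0, hc0, hc0min⟩ := Finset.exists_min_image (C.erase ch) (fun i => (U i).card) herne
  have hc0C : c0 ∈ C := Finset.mem_of_mem_erase hc0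
  have hc0ne : c0 ≠ ch := (Finset.mem_erase.1 hc0).1
  have hsub : ∀ c' ∈ C.erase ch, U c0 ⊆ U c' := by
    intro c' hc'
    rcases htot c0 c' with h | h
    · exact h
    · rw [Finset.eq_of_subset_of_card_le h (hc0min c' hc')]
  have hchc0 : U ch ⊆ U c0 := by
    rcases htot ch c0 with h | h
    · exact h
    · rw [Finset.eq_of_subset_of_card_le h (hchmin c0 hc0C)]
  have hss : U ch ⊂ U c0 := hchc0.ssubset_of_ne (hdist ch hchC c0 hc0C (Ne.symm hc0ne))
  obtain ⟨bs, hbs, hbsne⟩ := Finset.exists_of_ssubset hss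
  have hflag : ((C.erase ch : Finset (Fin n)) : Set (Fin n)) ⊆ c bs := by
    intro x hx
    rw [Finset.mem_coe] at hx
    exact (hmemU x bs).1 (hsub x hx hbs)
  have hcl : ch ∈ c bs := by
    have h1 := hC.mem_closure_erase hchC
    have h2 : M.closure ((C.erase ch : Finset (Fin n)) : Set (Fin n)) ⊆ M.closure (c bs) :=
      M.closure_subset_closure hflag
    rw [(hflat bs).closure] at h2
    exact h2 h1
  exact hbsne ((hmemU ch bs).2 hcl)

theorem easy_dir {M : Matroid (Fin n)} (hM : M.Loopless') (hE : M.E = Set.univ) {k : ℕ}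
    (c : Fin k → Set (Fin n)) (hflat : ∀ b, M.IsFlat (c b)) (hmono : Monotone c)
    {f : ExteriorAlgebra ℤ (Module.Dual ℤ (Fin n → ℤ))} (hf : f ∈ OSidealD M) :
    pairPure k (fun b => eS (c b)) f = 0 := by
  classical
  refine Submodule.span_induction ?_ (by simp) (fun x y _ _ hx hy => by
    rw [map_add, hx, hy, add_zero]) (fun a x _ hx => by rw [map_smul, hx, smul_zero]) hf
  rintro z ⟨x, y, I, hI, rfl⟩
  rw [pairPure_eq_detTop]
  simp only [LinearMap.comp_apply, AlgHom.toLinearMap_apply, map_mul]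
  have hmid : ExteriorAlgebra.map (PhiMap (fun b => eS (c b))) (bndD n (FId I)) = 0 := by
    obtain ⟨m, hm⟩ : ∃ m, I.card = m + 1 :=
      Nat.exists_eq_succ_of_ne_zero (fun h => hI.not_indep
        (by rw [Finset.card_eq_zero.1 h]; simpa using M.empty_indep))
    rw [FId_eq hm, bndD, contract_ιMulti, map_sum]
    simp only [map_smul, map_apply_ιMulti, eval_fd, mul_one]
    obtain ⟨xx, hxI, yy, hyI, hxy, hiff⟩ := exists_dup_row hM hE c hflat hmono hI
    obtain ⟨a, ha⟩ : ∃ a, I.orderEmbOfFin hm a = xx := by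
      have : xx ∈ Set.range (I.orderEmbOfFin hm) := by
        rw [Finset.range_orderEmbOfFin]; exact Finset.mem_coe.2 hxI
      exact this.imp fun _ h => h
    obtain ⟨a', ha'⟩ : ∃ a', I.orderEmbOfFin hm a' = yy := by
      have : yy ∈ Set.range (I.orderEmbOfFin hm) := by
        rw [Finset.range_orderEmbOfFin]; exact Finset.mem_coe.2 hyI
      exact this.imp fun _ h => h
    have hane : a ≠ a' := fun h => hxy (by rw [← ha, ← ha', h])
    have hrows : (fun a => PhiMap (fun b => eS (c b)) (fd (I.orderEmbOfFin hm a))) a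
        = (fun a => PhiMap (fun b => eS (c b)) (fd (I.orderEmbOfFin hm a))) a' := by
      funext b
      show fd (I.orderEmbOfFin hm a) (eS (c b)) = fd (I.orderEmbOfFin hm a') (eS (c b))
      rw [ha, ha']
      show eS (c b) xx = eS (c b) yy
      unfold eS
      by_cases hxb : xx ∈ c b
      · rw [if_pos hxb, if_pos ((hiff b).1 hxb)]
      · rw [if_neg hxb, if_neg (fun hyb => hxb ((hiff b).2 hyb))]
    exact alt_sum_zero (R := ℤ)
      (fun a => PhiMap (fun b => eS (c b)) (fd (I.orderEmbOfFin hm a))) hane hrows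
  rw [hmid, mul_zero, zero_mul, map_zero]

/-! ### top-segment flags -/

open Finset in
noncomputable def topSeg (S : Finset (Fin n)) {k : ℕ} (hk : S.card = k) (j : ℕ) :
    Finset (Fin n) :=
  (Finset.univ.filter (fun i : Fin k => k ≤ (i:ℕ) + j)).image (S.orderEmbOfFin hk)

lemma topSeg_subset {S : Finset (Fin n)} {k : ℕ} (hk : S.card = k) (j : ℕ) :
    topSeg S hk j ⊆ S := by
  intro x hx
  obtain ⟨i, _, rfl⟩ := Finset.mem_image.1 hx
  exact Finset.orderEmbOfFin_mem S hk i

lemma mem_topSeg_ord {S : Finset (Fin n)} {k : ℕ} (hk : S.card = k) (i : Fin k) (j : ℕ) :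
    S.orderEmbOfFin hk i ∈ topSeg S hk j ↔ k ≤ (i:ℕ) + j := by
  constructor
  · intro hx
    obtain ⟨i', hi', hEq⟩ := Finset.mem_image.1 hx
    have : i' = i := (S.orderEmbOfFin hk).injective hEq
    subst this
    exact (Finset.mem_filter.1 hi').2
  · intro h
    exact Finset.mem_image.2 ⟨i, Finset.mem_filter.2 ⟨Finset.mem_univ _, h⟩, rfl⟩

lemma mem_topSeg_elim {S : Finset (Fin n)} {k : ℕ} (hk : S.card = k) {j : ℕ} {x : Fin n}
    (hx : x ∈ topSeg S hk j) : ∃ i : Fin k, k ≤ (i:ℕ) + j ∧ S.orderEmbOfFin hk i = x := by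
  obtain ⟨i, hi, hEq⟩ := Finset.mem_image.1 hx
  exact ⟨i, (Finset.mem_filter.1 hi).2, hEq⟩

lemma topSeg_mono {S : Finset (Fin n)} {k : ℕ} (hk : S.card = k) {j j' : ℕ} (h : j ≤ j') :
    topSeg S hk j ⊆ topSeg S hk j' := by
  intro x hx
  obtain ⟨i, hi, rfl⟩ := mem_topSeg_elim hk hx
  exact (mem_topSeg_ord hk i j').2 (by omega)

lemma topSeg_zero {S : Finset (Fin n)} {k : ℕ} (hk : S.card = k) :
    topSeg S hk 0 = ∅ := by
  rw [topSeg, Finset.image_eq_empty]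
  apply Finset.filter_eq_empty_iff.2
  intro i _
  have := i.2
  omega

noncomputable def flagTop (M : Matroid (Fin n)) (S : Finset (Fin n)) {k : ℕ}
    (hk : S.card = k) : Fin k → Set (Fin n) :=
  fun b => M.closure (topSeg S hk ((b:ℕ)+1))

lemma flagTop_flat {M : Matroid (Fin n)} {S : Finset (Fin n)} {k : ℕ} (hk : S.card = k)
    (b : Fin k) : M.IsFlat (flagTop M S hk b) := flat_closure M _

lemma not_mem_cl_empty {M : Matroid (Fin n)} (hM : M.Loopless') (hE : M.E = Set.univ)
    (x : Fin n) : x ∉ M.closure ∅ := by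
  have h1 : M.Indep {x} := hM x (by rw [hE]; trivial)
  have h2 := h1.notMem_closure_diff_of_mem (Set.mem_singleton x)
  simpa using h2

lemma not_mem_cl_topSeg {M : Matroid (Fin n)} {S : Finset (Fin n)} {k : ℕ}
    (hk : S.card = k) (hSI : M.Indep (S : Set (Fin n))) {x : Fin n} (hxS : x ∈ S)
    {j : ℕ} (hj : x ∉ topSeg S hk j) : x ∉ M.closure (topSeg S hk j) := by
  intro hx
  have hsub : ((topSeg S hk j : Finset (Fin n)) : Set (Fin n)) ⊆ (S : Set (Fin n)) \ {x} := by
    intro y hy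
    rw [Finset.mem_coe] at hy
    refine ⟨Finset.mem_coe.2 (topSeg_subset hk j hy), ?_⟩
    intro hyx
    rw [Set.mem_singleton_iff] at hyx
    exact hj (hyx ▸ hy)
  have := hSI.notMem_closure_diff_of_mem (Finset.mem_coe.2 hxS)
  exact this (M.closure_subset_closure hsub hx)

lemma flagTop_strictMono {M : Matroid (Fin n)} (hE : M.E = Set.univ) {S : Finset (Fin n)}
    {k : ℕ} (hk : S.card = k) (hSI : M.Indep (S : Set (Fin n))) :
    StrictMono (flagTop M S hk) := by
  intro b b' hbb
  constructor
  · exact M.closure_subset_closure (Finset.coe_subset.2 (topSeg_mono hk (by omega)))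
  · intro hsub
    set i' : Fin k := ⟨k - 1 - (b':ℕ), by have := b'.2; omega⟩ with hi'
    set sb' := S.orderEmbOfFin hk i' with hsb'
    have h1 : sb' ∈ topSeg S hk ((b':ℕ)+1) := by
      apply (mem_topSeg_ord hk i' _).2
      have := b'.2
      simp only [hi']
      omega
    have h2 : sb' ∈ flagTop M S hk b' := by
      apply M.subset_closure _ (by rw [hE]; exact Set.subset_univ _)
      exact Finset.mem_coe.2 h1
    have h3 : sb' ∉ topSeg S hk ((b:ℕ)+1) := by
      intro h
      rw [hsb', mem_topSeg_ord hk i'] at h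
      simp only [hi'] at h
      have := b'.2
      omega
    exact not_mem_cl_topSeg hk hSI (Finset.orderEmbOfFin_mem S hk i') h3 (hsub h2)

lemma mem_flagTop_ord {M : Matroid (Fin n)} (hE : M.E = Set.univ) {S : Finset (Fin n)}
    {k : ℕ} (hk : S.card = k) (hSI : M.Indep (S : Set (Fin n))) (a b : Fin k) :
    S.orderEmbOfFin hk a ∈ flagTop M S hk b ↔ k ≤ (a:ℕ) + (b:ℕ) + 1 := by
  constructor
  · intro h
    by_contra hcon
    have h3 : S.orderEmbOfFin hk a ∉ topSeg S hk ((b:ℕ)+1) := by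
      rw [mem_topSeg_ord]
      omega
    exact not_mem_cl_topSeg hk hSI (Finset.orderEmbOfFin_mem S hk a) h3 h
  · intro h
    apply M.subset_closure _ (by rw [hE]; exact Set.subset_univ _)
    exact Finset.mem_coe.2 ((mem_topSeg_ord hk a _).2 (by omega))

lemma forcing {M : Matroid (Fin n)} (hM : M.Loopless') (hE : M.E = Set.univ) {k : ℕ}
    {S T : Finset (Fin n)} (hkS : S.card = k) (hkT : T.card = k)
    (hS : NBC M S) (hT : NBC M T)
    (hrow : ∀ a : Fin k, ∃ b, T.orderEmbOfFin hkT a ∈ flagTop M S hkS b)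
    (hinj : ∀ a a' : Fin k, a ≠ a' →
      ¬ (∀ b, (T.orderEmbOfFin hkT a ∈ flagTop M S hkS b ↔
               T.orderEmbOfFin hkT a' ∈ flagTop M S hkS b))) :
    T = S := by
  classical
  have hSI := hS.1
  have hTI := hT.1
  set Bset : Fin k → Finset (Fin k) :=
    fun a => Finset.univ.filter (fun b => T.orderEmbOfFin hkT a ∈ flagTop M S hkS b) with hBset
  have hBne : ∀ a, (Bset a).Nonempty := by
    intro a; obtain ⟨b, hb⟩ := hrow a
    exact ⟨b, Finset.mem_filter.2 ⟨Finset.mem_univ _, hb⟩⟩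
  set tl : Fin k → Fin k := fun a => (Bset a).min' (hBne a) with htl
  have hP1 : ∀ a, T.orderEmbOfFin hkT a ∈ flagTop M S hkS (tl a) :=
    fun a => (Finset.mem_filter.1 ((Bset a).min'_mem (hBne a))).2
  have hflagmono : Monotone (flagTop M S hkS) := (flagTop_strictMono hE hkS hSI).monotone
  have hP2' : ∀ a b, tl a ≤ b → T.orderEmbOfFin hkT a ∈ flagTop M S hkS b :=
    fun a b hb => hflagmono hb (hP1 a)
  have hP2 : ∀ a b, b < tl a → T.orderEmbOfFin hkT a ∉ flagTop M S hkS b := by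
    intro a b hb hmem
    exact absurd (Finset.min'_le _ b (Finset.mem_filter.2 ⟨Finset.mem_univ _, hmem⟩))
      (not_le.2 hb)
  have htlinj : Function.Injective tl := by
    intro a a' hEq
    by_contra hne
    refine hinj a a' hne fun b => ?_
    constructor
    · intro h
      refine hP2' a' b ?_
      rw [← hEq]
      by_contra hlt
      exact hP2 a b (not_le.1 hlt) h
    · intro h
      refine hP2' a b ?_
      rw [hEq]
      by_contra hlt
      exact hP2 a' b (not_le.1 hlt) h
  have htlbij := (Finite.injective_iff_bijective).1 htlinj
  have main : ∀ bb : ℕ, ∀ b : Fin k, (b:ℕ) = bb → ∀ a, tl a = b →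
      T.orderEmbOfFin hkT a = S.orderEmbOfFin hkS ⟨k - 1 - (b:ℕ), by have := b.2; omega⟩ := by
    intro bb
    induction bb using Nat.strong_induction_on with
    | _ bb ih =>
    rintro b rfl a hab
    have heltT : T.orderEmbOfFin hkT a ∈ T := Finset.orderEmbOfFin_mem T hkT a
    have hin : T.orderEmbOfFin hkT a ∈ M.closure (topSeg S hkS ((b:ℕ)+1)) := by
      have := hP1 a
      rw [hab] at this
      exact this
    have hnotin : T.orderEmbOfFin hkT a ∉ M.closure (topSeg S hkS (b:ℕ)) := by
      rcases Nat.eq_zero_or_pos (b:ℕ) with h0 | hpos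
      · rw [h0, topSeg_zero]
        simpa using not_mem_cl_empty hM hE (T.orderEmbOfFin hkT a)
      · have hb'lt : (⟨(b:ℕ)-1, by have := b.2; omega⟩ : Fin k) < b := by
          rw [Fin.lt_def]; simp; omega
        have h2 := hP2 a ⟨(b:ℕ)-1, by have := b.2; omega⟩ (by rw [hab]; exact hb'lt)
        have hcoe : ((⟨(b:ℕ)-1, by have := b.2; omega⟩ : Fin k) : ℕ) + 1 = (b:ℕ) := by
          show (b:ℕ) - 1 + 1 = (b:ℕ); omega
        have h3 : T.orderEmbOfFin hkT a ∉ M.closure (topSeg S hkS (((b:ℕ)-1)+1)) := h2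
        rw [show (b:ℕ) - 1 + 1 = (b:ℕ) from by omega] at h3
        exact h3
    by_contra hne
    have heltseg : T.orderEmbOfFin hkT a ∉ topSeg S hkS ((b:ℕ)+1) := by
      intro hmem
      obtain ⟨i, hi, hEq⟩ := mem_topSeg_elim hkS hmem
      have hii : i ≠ ⟨k - 1 - (b:ℕ), by have := b.2; omega⟩ :=
        fun h => hne (by rw [← hEq, h])
      have hib : k ≤ (i:ℕ) + (b:ℕ) := by
        have hik := i.2
        have : (i:ℕ) ≠ k - 1 - (b:ℕ) := fun h => hii (Fin.ext h)
        omega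
      have hmem2 : T.orderEmbOfFin hkT a ∈ topSeg S hkS (b:ℕ) :=
        hEq ▸ (mem_topSeg_ord hkS i _).2 hib
      exact hnotin (M.subset_closure _ (by rw [hE]; exact Set.subset_univ _)
        (Finset.mem_coe.2 hmem2))
    have hsegI : M.Indep ((topSeg S hkS ((b:ℕ)+1) : Finset (Fin n)) : Set (Fin n)) :=
      hSI.subset (Finset.coe_subset.2 (topSeg_subset hkS _))
    have hdepX : M.Dep ((insert (T.orderEmbOfFin hkT a) (topSeg S hkS ((b:ℕ)+1)) :
        Finset (Fin n)) : Set (Fin n)) := by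
      rw [Finset.coe_insert, hsegI.insert_dep_iff]
      exact ⟨hin, fun h => heltseg (Finset.mem_coe.1 h)⟩
    obtain ⟨C, hCX, hC⟩ := exists_circ hdepX
    have hCsub : ∀ x ∈ C, x = T.orderEmbOfFin hkT a ∨ x ∈ topSeg S hkS ((b:ℕ)+1) :=
      fun x hx => Finset.mem_insert.1 (hCX hx)
    have heltC : T.orderEmbOfFin hkT a ∈ C := by
      by_contra hcon
      refine hC.1.not_indep (hsegI.subset ?_)
      intro x hx
      rw [Finset.mem_coe] at hx ⊢
      rcases hCsub x hx with rfl | h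
      · exact absurd hx hcon
      · exact h
    have hsbC : S.orderEmbOfFin hkS ⟨k - 1 - (b:ℕ), by have := b.2; omega⟩ ∈ C := by
      by_contra hcon
      have hsub2 : ((C.erase (T.orderEmbOfFin hkT a) : Finset (Fin n)) : Set (Fin n)) ⊆
          ((topSeg S hkS (b:ℕ) : Finset (Fin n)) : Set (Fin n)) := by
        intro x hx
        rw [Finset.mem_coe] at hx ⊢
        obtain ⟨hxne, hxC⟩ := Finset.mem_erase.1 hx
        rcases hCsub x hxC with rfl | h
        · exact absurd rfl hxne
        · obtain ⟨i, hi, hEq⟩ := mem_topSeg_elim hkS h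
          have hii : i ≠ ⟨k - 1 - (b:ℕ), by have := b.2; omega⟩ :=
            fun hh => hcon (by rw [← hEq, hh] at hxC; exact hxC)
          refine hEq ▸ (mem_topSeg_ord hkS i _).2 ?_
          have hik := i.2
          have : (i:ℕ) ≠ k - 1 - (b:ℕ) := fun hh => hii (Fin.ext hh)
          omega
      exact hnotin (M.closure_subset_closure hsub2 (hC.mem_closure_erase heltC))
    have hmucase : C.min' hC.nonempty = T.orderEmbOfFin hkT a ∨
        C.min' hC.nonempty = S.orderEmbOfFin hkS ⟨k - 1 - (b:ℕ), by have := b.2; omega⟩ := by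
      rcases hCsub _ (C.min'_mem hC.nonempty) with h | h
      · exact Or.inl h
      · obtain ⟨i, hi, hEq⟩ := mem_topSeg_elim hkS h
        rcases eq_or_ne i ⟨k - 1 - (b:ℕ), by have := b.2; omega⟩ with hieq | hii
        · exact Or.inr (by rw [← hEq, hieq])
        · exfalso
          have hik := i.2
          have hisb : k - 1 - (b:ℕ) < (i:ℕ) := by
            have : (i:ℕ) ≠ k - 1 - (b:ℕ) := fun hh => hii (Fin.ext hh)
            omega
          have hlt : S.orderEmbOfFin hkS ⟨k - 1 - (b:ℕ), by have := b.2; omega⟩ <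
              C.min' hC.nonempty := by
            rw [← hEq]
            exact (S.orderEmbOfFin hkS).strictMono (Fin.lt_def.2 hisb)
          exact absurd (C.min'_le _ hsbC) (not_le.2 hlt)
    rcases hmucase with hmue | hmusb
    · refine hS.2 ⟨C, hC, ?_⟩
      intro x hx
      obtain ⟨hxne, hxC⟩ := Finset.mem_erase.1 hx
      rw [hmue] at hxne
      rcases hCsub x hxC with rfl | h
      · exact absurd rfl hxne
      · exact topSeg_subset hkS _ h
    · refine hT.2 ⟨C, hC, ?_⟩
      intro x hx
      obtain ⟨hxne, hxC⟩ := Finset.mem_erase.1 hx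
      rw [hmusb] at hxne
      rcases hCsub x hxC with rfl | h
      · exact heltT
      · obtain ⟨i, hi, hEq⟩ := mem_topSeg_elim hkS h
        have hine : i ≠ ⟨k - 1 - (b:ℕ), by have := b.2; omega⟩ :=
          fun hh => hxne (by rw [← hEq, hh])
        have hik := i.2
        have hib : k ≤ (i:ℕ) + (b:ℕ) := by
          have : (i:ℕ) ≠ k - 1 - (b:ℕ) := fun hh => hine (Fin.ext hh)
          omega
        have hb'lt : k - 1 - (i:ℕ) < (b:ℕ) := by omega
        obtain ⟨a', ha'⟩ := htlbij.2 ⟨k - 1 - (i:ℕ), by omega⟩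
        have hmain := ih (k - 1 - (i:ℕ)) hb'lt ⟨k - 1 - (i:ℕ), by omega⟩ rfl a' ha'
        have hval : k - 1 - ((⟨k - 1 - (i:ℕ), by omega⟩ : Fin k) : ℕ) = (i:ℕ) := by
          show k - 1 - (k - 1 - (i:ℕ)) = (i:ℕ); omega
        have hxa' : x = T.orderEmbOfFin hkT a' := by
          rw [hmain, ← hEq]
          congr 1
          exact Fin.ext hval.symm
        rw [hxa']
        exact Finset.orderEmbOfFin_mem T hkT a'
  have hTS : T ⊆ S := by
    intro x hx
    obtain ⟨a, ha⟩ : ∃ a, T.orderEmbOfFin hkT a = x := by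
      have : x ∈ Set.range (T.orderEmbOfFin hkT) := by
        rw [Finset.range_orderEmbOfFin]; exact Finset.mem_coe.2 hx
      exact this.imp fun _ h => h
    have := main ((tl a):ℕ) (tl a) rfl a rfl
    rw [← ha, this]
    exact Finset.orderEmbOfFin_mem S hkS _
  exact Finset.eq_of_subset_of_card_le hTS (by rw [hkS, hkT])

lemma det_rev_ne_zero (k : ℕ) :
    Matrix.det (Matrix.of fun a b : Fin k => if k ≤ (a:ℕ)+(b:ℕ)+1 then (1:ℤ) else 0) ≠ 0 := by
  classical
  have hfac : (Matrix.of fun a b : Fin k => if k ≤ (a:ℕ)+(b:ℕ)+1 then (1:ℤ) else 0)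
      = ((Fin.revPerm : Equiv.Perm (Fin k)).permMatrix ℤ) *
        (Matrix.of fun b b' : Fin k => if b ≤ b' then (1:ℤ) else 0) := by
    rw [Equiv.Perm.permMatrix, PEquiv.toMatrix_toPEquiv_mul]
    ext a b
    rw [Matrix.submatrix_apply, id]
    simp only [Matrix.of_apply, Fin.revPerm_apply]
    have h1 := a.2
    have h2 := b.2
    have hrev : ((Fin.rev a : Fin k) : ℕ) = k - (a+1) := Fin.val_rev a
    by_cases h : k ≤ (a:ℕ)+(b:ℕ)+1
    · rw [if_pos h, if_pos (Fin.le_def.2 (by omega))]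
    · rw [if_neg h, if_neg (fun hc => h (by have := Fin.le_def.1 hc; omega))]
  rw [hfac, Matrix.det_mul]
  have hdet1 : Matrix.det ((Fin.revPerm : Equiv.Perm (Fin k)).permMatrix ℤ)
      = Equiv.Perm.sign (Fin.revPerm (n := k)) := Matrix.det_permutation _
  have hdet2 : Matrix.det (Matrix.of fun b b' : Fin k => if b ≤ b' then (1:ℤ) else 0) = 1 := by
    rw [Matrix.det_of_upperTriangular (M := Matrix.of fun b b' : Fin k =>
      if b ≤ b' then (1:ℤ) else 0) ?_]
    · rw [Finset.prod_congr rfl (fun i _ => ?_), Finset.prod_const_one]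
      rw [Matrix.of_apply, if_pos le_rfl]
    · intro i j hij
      rw [Matrix.of_apply, if_neg (not_le.2 (show j < i from hij))]
  rw [hdet1, hdet2, mul_one]
  rcases Int.units_eq_one_or (Equiv.Perm.sign (Fin.revPerm (n := k))) with h | h <;>
    rw [h] <;> norm_num

open Classical in
lemma pair_FId_flag {k : ℕ} (c : Fin k → Set (Fin n)) {T : Finset (Fin n)} (hkT : T.card = k) :
    pairPure k (fun b => eS (c b)) (FId T) =
      Matrix.det (Matrix.of fun a b : Fin k =>
        if T.orderEmbOfFin hkT a ∈ c b then (1:ℤ) else 0) := by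
  rw [FId_eq hkT, pairPure_eq]
  congr 1

lemma diag_ne_zero {M : Matroid (Fin n)} (hE : M.E = Set.univ) {k : ℕ} {S : Finset (Fin n)}
    (hkS : S.card = k) (hSI : M.Indep (S : Set (Fin n))) :
    pairPure k (fun b => eS (flagTop M S hkS b)) (FId S) ≠ 0 := by
  classical
  rw [pair_FId_flag (hkT := hkS)]
  have hEq : (Matrix.of fun a b : Fin k =>
      if S.orderEmbOfFin hkS a ∈ flagTop M S hkS b then (1:ℤ) else 0)
      = Matrix.of fun a b : Fin k => if k ≤ (a:ℕ)+(b:ℕ)+1 then (1:ℤ) else 0 := by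
    ext a b
    simp only [Matrix.of_apply]
    by_cases h : k ≤ (a:ℕ)+(b:ℕ)+1
    · rw [if_pos ((mem_flagTop_ord hE hkS hSI a b).2 h), if_pos h]
    · rw [if_neg (fun hm => h ((mem_flagTop_ord hE hkS hSI a b).1 hm)), if_neg h]
  rw [hEq]
  exact det_rev_ne_zero k

lemma offdiag_zero {M : Matroid (Fin n)} (hM : M.Loopless') (hE : M.E = Set.univ) {k : ℕ}
    {S T : Finset (Fin n)} (hkS : S.card = k) (hkT : T.card = k)
    (hS : NBC M S) (hT : NBC M T) (hne : T ≠ S) :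
    pairPure k (fun b => eS (flagTop M S hkS b)) (FId T) = 0 := by
  classical
  rw [pair_FId_flag (hkT := hkT)]
  by_contra hdet
  apply hne
  refine forcing hM hE hkS hkT hS hT ?_ ?_
  · intro a
    by_contra hcon
    push_neg at hcon
    exact hdet (Matrix.det_eq_zero_of_row_eq_zero a (fun b => if_neg (hcon b)))
  · intro a a' hne' hiff
    refine hdet (Matrix.det_zero_of_row_eq hne' (funext fun b => ?_))
    simp only [Matrix.of_apply]
    by_cases hm : T.orderEmbOfFin hkT a ∈ flagTop M S hkS b
    · rw [if_pos hm, if_pos ((hiff b).1 hm)]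
    · rw [if_neg hm, if_neg (fun hm' => hm ((hiff b).2 hm'))]

end Stmt14

open Stmt14 in
/-- For a loopless matroid `M` on `{0, ..., N}`, with `V = ℤ^{N+1}`
and `W = V^*` in dual bases, and every `k`: the annihilator of
`F_k(Σ(M)) ⊆ ⋀^k V` (spanned by the flag polyvectors `e_{J₁} ∧ ... ∧ e_{J_k}` over
flags of flats) inside `⋀^k W` equals the degree-`k` part `OS^k` of the Orlik-Solomon
ideal. -/
theorem stmt_14 {N n : ℕ} (M : Matroid (Fin (N + 1))) (hM : M.Loopless')
    (hE : M.E = Set.univ) (hn : M.rk' Set.univ = n) (k : ℕ) :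
    {f : ExteriorAlgebra ℤ (Module.Dual ℤ (Fin (N + 1) → ℤ)) |
        f ∈ ⋀[ℤ]^k (Module.Dual ℤ (Fin (N + 1) → ℤ)) ∧
        ∀ c : Fin k → Set (Fin (N + 1)), (∀ i, M.IsFlat (c i)) → StrictMono c →
          pairPure k (fun i => eS (c i)) f = 0} =
      {f | f ∈ OSidealD M ∧ f ∈ ⋀[ℤ]^k (Module.Dual ℤ (Fin (N + 1) → ℤ))} := by
  classical
  ext f
  simp only [Set.mem_setOf_eq]
  constructor
  · rintro ⟨hfk, hpair⟩
    refine ⟨?_, hfk⟩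
    have hsp := exterior_mem_span (n := N+1) hfk
    have hsup : f ∈ OSidealD M ⊔ nbcSpan M k := by
      refine Submodule.span_le.2 ?_ hsp
      rintro z ⟨S, hSk, rfl⟩
      exact FId_mem_sup hE _ S rfl hSk
    obtain ⟨g, hg, h, hh, rfl⟩ := Submodule.mem_sup.1 hsup
    have hpairh : ∀ (c : Fin k → Set (Fin (N+1))), (∀ b, M.IsFlat (c b)) → StrictMono c →
        pairPure k (fun b => eS (c b)) h = 0 := by
      intro c hflat hmono
      have h1 := hpair c hflat hmono
      rw [map_add, easy_dir hM hE c hflat hmono.monotone hg, zero_add] at h1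
      exact h1
    have hh' := hh
    rw [nbcSpan, Finsupp.mem_span_range_iff_exists_finsupp] at hh'
    obtain ⟨cf, hcf⟩ := hh'
    have hcz : ∀ S : {S : Finset (Fin (N+1)) // S.card = k ∧ NBC M S}, cf S = 0 := by
      intro S
      have hflat : ∀ b, M.IsFlat (flagTop M S.1 S.2.1 b) := flagTop_flat S.2.1
      have hmono := flagTop_strictMono hE S.2.1 S.2.2.1
      have hp := hpairh (flagTop M S.1 S.2.1) hflat hmono
      rw [← hcf, map_finsuppSum, Finsupp.sum] at hp
      by_cases hmem : S ∈ cf.support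
      swap
      · exact Finsupp.notMem_support_iff.1 hmem
      rw [Finset.sum_eq_single S (fun T _ hTne => by
          rw [map_smul, offdiag_zero hM hE S.2.1 T.2.1 S.2.2 T.2.2
            (fun hEq => hTne (Subtype.ext hEq)), smul_zero])
        (fun hms => absurd hmem hms)] at hp
      rw [map_smul, smul_eq_mul] at hp
      rcases mul_eq_zero.1 hp with h' | h'
      · exact h'
      · exact absurd h' (diag_ne_zero hE S.2.1 S.2.2.1)
    have hzero : h = 0 := by
      rw [← hcf, Finsupp.sum]
      apply Finset.sum_eq_zero
      intro T _
      rw [hcz T, zero_smul]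
    rw [hzero, add_zero]
    exact hg
  · rintro ⟨hOS, hfk⟩
    exact ⟨hfk, fun c hflat hmono => easy_dir hM hE c hflat hmono.monotone hOS⟩
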